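/- Let (R,𝔪) be a Noetherian local ring, M a finitely generated R-module, and 𝔔 a minimal prime of the R̂-module M̂. Then 𝔔 is a minimal prime of the ideal (𝔔 ∩ R)·R̂, i.e., 𝔔 ∈ Min(R̂/(𝔔 ∩ R)R̂). -/

import Mathlib

noncomputable section
open CategoryTheory

namespace Paper

variable (R : Type) [CommRing R]

/-- The `i`-th local cohomology of the `R`-module `M` with respect to the ideal `I`. -/
abbrev H (I : Ideal R) (i : ℕ) (M : Type) [AddCommGroup M] [Module R M] : ModuleCat R :=
  (localCohomology I i).obj (ModuleCat.of R M)

/-- `N` is a `p`-secondary submodule of `M`: it is nonzero, every `r : R` acts on it either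
surjectively or nilpotently, and `p` is the radical of its annihilator. -/
def IsSecondaryFor {M : Type} [AddCommGroup M] [Module R M]
    (N : Submodule R M) (p : Ideal R) : Prop :=
  N ≠ ⊥ ∧
  (∀ r : R, (∀ m ∈ N, ∃ n ∈ N, r • n = m) ∨ (∃ k : ℕ, ∀ m ∈ N, r ^ k • m = 0)) ∧
  N.annihilator.radical = p

/-- A minimal secondary representation of the module `M`. -/
structure MinSecRep (M : Type) [AddCommGroup M] [Module R M] where
  n : ℕ
  S : Fin n → Submodule R M
  p : Fin n → Ideal R
  prime : ∀ i, (p i).IsPrime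
  sec : ∀ i, IsSecondaryFor R (S i) (p i)
  sum : (⨆ i, S i) = ⊤
  inj : Function.Injective p
  irred : ∀ j, ¬ (S j ≤ ⨆ i ∈ ({j}ᶜ : Set (Fin n)), S i)

/-- `M` is representable: it is a (finite) sum of secondary submodules. -/
def IsRepresentable (M : Type) [AddCommGroup M] [Module R M] : Prop :=
  ∃ (n : ℕ) (S : Fin n → Submodule R M) (p : Fin n → Ideal R),
    (∀ i, (p i).IsPrime) ∧ (∀ i, IsSecondaryFor R (S i) (p i)) ∧ (⨆ i, S i) = ⊤

/-- The set of attached primes of `M`: the primes occurring in a minimal secondary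
representation of `M`. -/
def attached (M : Type) [AddCommGroup M] [Module R M] : Set (Ideal R) :=
  {q | ∃ (rep : MinSecRep R M) (i : Fin rep.n), rep.p i = q}

/-- The coheight (dimension of `R/I`): Krull dimension of the set of primes containing `I`. -/
def coheight (I : Ideal R) : WithBot ℕ∞ :=
  Order.krullDim {p : Ideal R // p.IsPrime ∧ I ≤ p}

/-- The Krull dimension of the ring `R`. -/
def ringDim : WithBot ℕ∞ := Order.krullDim {p : Ideal R // p.IsPrime}

/-- The Krull dimension of (the support of) the finitely generated module `M`. -/
def dimMod (M : Type) [AddCommGroup M] [Module R M] : WithBot ℕ∞ :=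
  coheight R (Module.annihilator R M)

/-- The dimension of the localized module `M_q`: chains of primes in the support of `M`
contained in `q`. -/
def dimModAt (M : Type) [AddCommGroup M] [Module R M] (q : Ideal R) : WithBot ℕ∞ :=
  Order.krullDim {p : Ideal R // p.IsPrime ∧ Module.annihilator R M ≤ p ∧ p ≤ q}

/-- The support of a finitely generated module: primes containing the annihilator. -/
def supp (M : Type) [AddCommGroup M] [Module R M] : Set (Ideal R) :=
  {p | p.IsPrime ∧ Module.annihilator R M ≤ p}

/-- `Min M`: minimal primes of the support of `M`. -/
def minSupp (M : Type) [AddCommGroup M] [Module R M] : Set (Ideal R) :=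
  (Module.annihilator R M).minimalPrimes

/-- `Assh M`: primes in the support of maximal coheight. -/
def assh (M : Type) [AddCommGroup M] [Module R M] : Set (Ideal R) :=
  {p | p ∈ supp R M ∧ coheight R p = dimMod R M}

open RingTheory.Sequence in
/-- Depth of `M` with respect to the ideal `J`: supremum of the lengths of `M`-regular
sequences contained in `J`. -/
def depthOn (J : Ideal R) (M : Type) [AddCommGroup M] [Module R M] : ℕ∞ :=
  ⨆ l ∈ {l : List R | (∀ x ∈ l, x ∈ J) ∧ IsRegular M l}, (l.length : ℕ∞)

/-- `M` is a Cohen–Macaulay module over the local ring `R`: depth = dimension. -/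
def IsCMLocalMod [IsLocalRing R] (M : Type) [AddCommGroup M] [Module R M] : Prop :=
  (depthOn R (IsLocalRing.maximalIdeal R) M : WithBot ℕ∞) = dimMod R M

/-- `R` is a Cohen–Macaulay local ring: it is local and its depth (w.r.t. its Jacobson
radical, which is the maximal ideal) equals its Krull dimension. -/
def IsCMLocalRing : Prop :=
  IsLocalRing R ∧ ((depthOn R ((⊥ : Ideal R).jacobson) R : WithBot ℕ∞) = ringDim R)

/-- `R` is a Cohen–Macaulay ring: all of its localizations at primes are CM local rings. -/
def IsCMRing : Prop :=
  ∀ (p : Ideal R) [p.IsPrime], IsCMLocalRing (Localization.AtPrime p)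

/-- `M` is an equidimensional module: every minimal prime of its support has coheight equal
to the dimension of `M`. -/
def IsEquidim (M : Type) [AddCommGroup M] [Module R M] : Prop :=
  ∀ q ∈ minSupp R M, coheight R q = dimMod R M

/-- `R` is catenary: any two saturated chains of primes with the same endpoints have the
same length. -/
def IsCatenary : Prop :=
  ∀ (c₁ c₂ : LTSeries {p : Ideal R // p.IsPrime}),
    c₁.head = c₂.head → c₁.last = c₂.last →
    (∀ i : Fin c₁.length, c₁.toFun i.castSucc ⋖ c₁.toFun i.succ) →
    (∀ i : Fin c₂.length, c₂.toFun i.castSucc ⋖ c₂.toFun i.succ) →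
    c₁.length = c₂.length

/-- `R` is universally catenary: every finitely generated `R`-algebra is catenary. -/
def IsUnivCatenary : Prop :=
  ∀ (A : Type) [CommRing A] [Algebra R A], Algebra.FiniteType R A → IsCatenary A

/-- `x` is a uniform local cohomological annihilator of `M`: `x` avoids all minimal primes
of `M` and, for every maximal ideal `m`, kills `H^i_m(M)` for all `i < dim M_m`. -/
def IsULCA (M : Type) [AddCommGroup M] [Module R M] (x : R) : Prop :=
  (∀ p ∈ minSupp R M, x ∉ p) ∧
  ∀ (m : Ideal R), m.IsMaximal → ∀ i : ℕ, (i : WithBot ℕ∞) < dimModAt R M m →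
    ∀ y : H R m i M, x • y = 0

/-- `M` has a uniform local cohomological annihilator. -/
def HasULCA (M : Type) [AddCommGroup M] [Module R M] : Prop := ∃ x, IsULCA R M x

/-- `R/p` has a uniform local cohomological annihilator (local case): some `x ∉ p` kills
`H^i_𝔪(R/p)` for all `i < dim R/p`. -/
def HasULCAQuot [IsLocalRing R] (p : Ideal R) : Prop :=
  ∃ x ∉ p, ∀ i : ℕ, (i : WithBot ℕ∞) < coheight R p →
    ∀ y : H R (IsLocalRing.maximalIdeal R) i (R ⧸ p), x • y = 0

/-- `M` is generalized Cohen–Macaulay over the local ring `R`: a power of the maximal ideal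
kills all local cohomology below the dimension. -/
def IsGCM [IsLocalRing R] (M : Type) [AddCommGroup M] [Module R M] : Prop :=
  ∃ n : ℕ, ∀ i : ℕ, (i : WithBot ℕ∞) < dimMod R M →
    ∀ a ∈ (IsLocalRing.maximalIdeal R) ^ n,
      ∀ y : H R (IsLocalRing.maximalIdeal R) i M, a • y = 0

end Paper

open TensorProduct in
/-- Annihilator of a flat base change of a finite module is the extension of the
annihilator. -/
theorem annihilator_baseChange_of_flat (R S M : Type) [CommRing R] [CommRing S] [Algebra R S]
    [Module.Flat R S] [AddCommGroup M] [Module R M] [Module.Finite R M] :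
    Module.annihilator S (S ⊗[R] M) =
      (Module.annihilator R M).map (algebraMap R S) := by
  obtain ⟨n, m, hm⟩ := Module.Finite.exists_fin (R := R) (M := M)
  apply le_antisymm
  · -- hard direction
    intro x hx
    -- φ : R →ₗ (Fin n → M)
    set φ : R →ₗ[R] (Fin n → M) := LinearMap.pi (fun i => LinearMap.toSpanSingleton R M (m i))
      with hφ
    have hexact : Function.Exact ((Module.annihilator R M : Submodule R R).subtype) φ := by
      intro r
      constructor
      · intro hr
        have h1 : ∀ i, r • m i = 0 := fun i => congrFun hr i
        have hr' : r ∈ Module.annihilator R M := by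
          rw [Module.mem_annihilator]
          intro x
          have hx' : x ∈ Submodule.span R (Set.range m) := hm ▸ Submodule.mem_top
          induction hx' using Submodule.span_induction with
          | mem y hy => obtain ⟨i, rfl⟩ := hy; exact h1 i
          | zero => simp
          | add a b _ _ ha hb => rw [smul_add, ha, hb, add_zero]
          | smul c a _ ha => rw [smul_comm, ha, smul_zero]
        exact ⟨⟨r, hr'⟩, rfl⟩
      · rintro ⟨⟨a, ha⟩, rfl⟩
        ext i
        exact Module.mem_annihilator.mp ha (m i)
    have hexactS := Module.Flat.lTensor_exact S hexact
    have hker : (LinearMap.lTensor S φ) (x ⊗ₜ (1 : R)) = 0 := by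
      have h0 : ∀ i, x ⊗ₜ[R] (m i) = (0 : S ⊗[R] M) := by
        intro i
        have := Module.mem_annihilator.mp hx ((1 : S) ⊗ₜ[R] (m i))
        rwa [smul_tmul', smul_eq_mul, mul_one] at this
      have : (LinearMap.lTensor S φ) (x ⊗ₜ (1 : R)) = x ⊗ₜ (fun i => m i) := by
        rw [LinearMap.lTensor_tmul]
        congr 1
        ext i
        simp [hφ]
      rw [this]
      have hsum : (fun i => m i) = ∑ i : Fin n, Pi.single i (m i) := by
        rw [Finset.univ_sum_single]
      rw [hsum, tmul_sum]
      refine Finset.sum_eq_zero fun i _ => ?_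
      have : x ⊗ₜ[R] (Pi.single i (m i) : Fin n → M) =
          (LinearMap.lTensor S (LinearMap.single R (fun _ : Fin n => M) i)) (x ⊗ₜ (m i)) := rfl
      rw [this, h0 i, map_zero]
    obtain ⟨t, ht⟩ := (hexactS _).mp hker
    -- apply rid
    have : x = (TensorProduct.rid R S) ((LinearMap.lTensor S
        ((Module.annihilator R M : Submodule R R).subtype)) t) := by
      rw [ht]; simp
    rw [this]
    clear ht hker this
    induction t using TensorProduct.induction_on with
    | zero => simp
    | tmul s a =>
        obtain ⟨a, ha⟩ := a
        simp only [LinearMap.lTensor_tmul, Submodule.coe_subtype, TensorProduct.rid_tmul]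
        rw [Algebra.smul_def]
        exact Ideal.mul_mem_right _ _ (Ideal.mem_map_of_mem _ ha)
    | add a b ha hb =>
        rw [map_add, map_add]
        exact Ideal.add_mem _ ha hb
  · -- easy direction
    rw [Ideal.map_le_iff_le_comap]
    intro a ha
    rw [Ideal.mem_comap, Module.mem_annihilator]
    intro t
    induction t using TensorProduct.induction_on with
    | zero => simp
    | tmul s x =>
        rw [smul_tmul', algebraMap_smul, smul_tmul, Module.mem_annihilator.mp ha x,
          tmul_zero]
    | add a b ha hb => rw [smul_add, ha, hb, add_zero]

/-- If `Q` is a minimal prime of the completed module `M^`, then `Q` is a minimal prime of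
the ideal `(Q ∩ R)·R^`. -/
theorem min_completion_mem_minimalPrimes (R : Type) [CommRing R] [IsNoetherianRing R]
    [IsLocalRing R] (M : Type) [AddCommGroup M] [Module R M] [Module.Finite R M]
    (Q : Ideal (AdicCompletion (IsLocalRing.maximalIdeal R) R))
    (hQ : Q ∈ Paper.minSupp (AdicCompletion (IsLocalRing.maximalIdeal R) R)
        (AdicCompletion (IsLocalRing.maximalIdeal R) M)) :
    Q ∈ (Ideal.map (algebraMap R (AdicCompletion (IsLocalRing.maximalIdeal R) R))
        (Q.comap (algebraMap R
          (AdicCompletion (IsLocalRing.maximalIdeal R) R)))).minimalPrimes := by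
  set S := AdicCompletion (IsLocalRing.maximalIdeal R) R with hS
  set f := algebraMap R S with hf
  haveI : Module.Flat R S :=
    AdicCompletion.flat_of_isNoetherian (IsLocalRing.maximalIdeal R)
  have key : Module.annihilator S (AdicCompletion (IsLocalRing.maximalIdeal R) M)
      = (Module.annihilator R M).map f := by
    rw [← LinearEquiv.annihilator_eq
      (AdicCompletion.ofTensorProductEquivOfFiniteNoetherian (IsLocalRing.maximalIdeal R) M)]
    exact annihilator_baseChange_of_flat R S M
  have hQ' : Minimal (fun q : Ideal S => q.IsPrime ∧
      Module.annihilator S (AdicCompletion (IsLocalRing.maximalIdeal R) M) ≤ q) Q := hQ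
  obtain ⟨⟨hQprime, hAQ⟩, hmin⟩ := hQ'
  have hAcomap : Module.annihilator R M ≤ Q.comap f := by
    rw [key] at hAQ
    exact le_trans Ideal.le_comap_map (Ideal.comap_mono hAQ)
  constructor
  · exact ⟨hQprime, Ideal.map_comap_le⟩
  · rintro Q' ⟨hQ'prime, hleQ'⟩ hQ'Q
    refine hmin ⟨hQ'prime, ?_⟩ hQ'Q
    rw [key]
    exact le_trans (Ideal.map_mono hAcomap) hleQ'
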